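/- arXiv:2411.08770 — 2 statements merged into one kernel-verified Lean document; each statement's English description precedes it below -/
import Mathlib

section
/- Let C be a category with binary products and binary coproducts, 𝔸 and O objects of C, A the endofunctor 𝔸 × _, and B the machine endofunctor B X = (𝔸 × X) ⊕ O. Let (T, η, μ) be a monad on C and G an endofunctor on C such that: (A1) G preserves binary coproducts; (A2) there is a natural isomorphism ρ : A ⋙ G ≅ G ⋙ A (i.e. G(𝔸 × X) ≅ 𝔸 × G X naturally); (A3) A has a Kleisli lifting Ā on Kl(T) (an endofunctor with Ā ∘ Free = Free ∘ A), so that by the lifting lemma A has a Kleisli lifting Ã on Kl(T^G). Then the assignment B̂ X = B X on objects, and on a morphism f : X ⟶ Y of Kl(T^G) the composite of the canonical isomorphism G(B X) ≅ G(A X) ⊕ G O (from A1), the map Ã f ⊕ η_{G O}, and the map into T G(B Y) induced by the images under T G of the two coproduct injections A Y → B Y and O → B Y, defines an endofunctor B̂ on Kl(T^G); moreover B̂ is a Kleisli lifting of B for the relative monad, i.e. B̂ ∘ L = L ∘ B. -/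
open CategoryTheory CategoryTheory.Limits

universe v u

variable {C : Type u} [Category.{v} C]

/-- The Kleisli category of the relative monad `T^G` induced by a monad `T` and
an endofunctor `G`: objects are those of `C`, and `Hom(X, Y) = Kl(T)(G X, G Y)`. -/
def RelKleisli (T : Monad C) (G : C ⥤ C) : Type u :=
  InducedCategory (Kleisli T) (fun X : C => Kleisli.mk T (G.obj X))

instance (T : Monad C) (G : C ⥤ C) : Category (RelKleisli T G) :=
  inferInstanceAs (Category (InducedCategory (Kleisli T) (fun X : C => Kleisli.mk T (G.obj X))))

/-- The functor `L : C ⥤ Kl(T^G)` given by `L X = X` and `L f = Free (G f)`. -/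
def relKleisliFree (T : Monad C) (G : C ⥤ C) : C ⥤ RelKleisli T G where
  obj X := X
  map f := InducedCategory.Hom.mk (F := fun X : C => Kleisli.mk T (G.obj X)) ((Kleisli.Adjunction.toKleisli T).map (G.map f))
  map_id X := by apply InducedCategory.Hom.ext; simp only [CategoryTheory.Functor.map_id]; rfl
  map_comp f g := by apply InducedCategory.Hom.ext; simp only [CategoryTheory.Functor.map_comp]; rfl

/-- The lifting `Ã` on morphisms: for `f : X ⟶ Y` in `Kl(T^G)`,
`Ã f = Free(ρ_X) ≫ Ā(f) ≫ Free(ρ_Y⁻¹)`. -/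
def relKleisliLiftMap (T : Monad C) (G A : C ⥤ C) (ρ : A ⋙ G ≅ G ⋙ A)
    (Abar : Kleisli T ⥤ Kleisli T)
    (hAbar : Kleisli.Adjunction.toKleisli T ⋙ Abar =
      A ⋙ Kleisli.Adjunction.toKleisli T)
    {X Y : C}
    (f : (relKleisliFree T G).obj X ⟶ (relKleisliFree T G).obj Y) :
    (relKleisliFree T G).obj (A.obj X) ⟶ (relKleisliFree T G).obj (A.obj Y) :=
  InducedCategory.Hom.mk (F := fun X : C => Kleisli.mk T (G.obj X)) <| show (Kleisli.Adjunction.toKleisli T).obj (G.obj (A.obj X)) ⟶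
      (Kleisli.Adjunction.toKleisli T).obj (G.obj (A.obj Y)) from
    (Kleisli.Adjunction.toKleisli T).map (ρ.hom.app X) ≫
      eqToHom (Functor.congr_obj hAbar (G.obj X)).symm ≫
      Abar.map (show (Kleisli.Adjunction.toKleisli T).obj (G.obj X) ⟶
          (Kleisli.Adjunction.toKleisli T).obj (G.obj Y) from InducedCategory.Hom.hom (F := fun X : C => Kleisli.mk T (G.obj X)) f) ≫
      eqToHom (Functor.congr_obj hAbar (G.obj Y)) ≫
      (Kleisli.Adjunction.toKleisli T).map (ρ.inv.app Y)

variable [HasBinaryProducts C] [HasBinaryCoproducts C]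

/-- The functor `A = 𝔸 × _`. -/
noncomputable def machineA (𝔸 : C) : C ⥤ C := prod.functor.obj 𝔸

/-- The machine endofunctor `B X = (𝔸 × X) ⊕ O`. -/
noncomputable def machineB (𝔸 O : C) : C ⥤ C where
  obj X := (machineA 𝔸).obj X ⨿ O
  map f := coprod.map ((machineA 𝔸).map f) (𝟙 O)
  map_id X := by simp
  map_comp f g := by simp

/-- The candidate lifting `B̂` on morphisms: the composite of the canonical
isomorphism `G(B X) ≅ G(A X) ⨿ G O`, the map `Ã f ⊕ η_{G O}` and the map
induced by the `T G`-images of the two coproduct injections. -/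
noncomputable def machineHatMap (T : Monad C) (G : C ⥤ C) (𝔸 O : C)
    [PreservesColimitsOfShape (Discrete WalkingPair) G]
    (ρ : machineA 𝔸 ⋙ G ≅ G ⋙ machineA 𝔸)
    (Abar : Kleisli T ⥤ Kleisli T)
    (hAbar : Kleisli.Adjunction.toKleisli T ⋙ Abar =
      machineA 𝔸 ⋙ Kleisli.Adjunction.toKleisli T)
    {X Y : C}
    (f : (relKleisliFree T G).obj X ⟶ (relKleisliFree T G).obj Y) :
    (relKleisliFree T G).obj ((machineB 𝔸 O).obj X) ⟶
      (relKleisliFree T G).obj ((machineB 𝔸 O).obj Y) :=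
  InducedCategory.Hom.mk (F := fun X : C => Kleisli.mk T (G.obj X)) <| Kleisli.Hom.mk <| show G.obj ((machineB 𝔸 O).obj X) ⟶ T.obj (G.obj ((machineB 𝔸 O).obj Y)) from
    (PreservesColimitPair.iso G ((machineA 𝔸).obj X) O).inv ≫
      coprod.map
        (show G.obj ((machineA 𝔸).obj X) ⟶ T.obj (G.obj ((machineA 𝔸).obj Y)) from
          (InducedCategory.Hom.hom (F := fun X : C => Kleisli.mk T (G.obj X)) (relKleisliLiftMap T G (machineA 𝔸) ρ Abar hAbar f)).of)
        (T.η.app (G.obj O)) ≫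
      coprod.desc
        (T.map (G.map (coprod.inl : (machineA 𝔸).obj Y ⟶ (machineB 𝔸 O).obj Y)))
        (T.map (G.map (coprod.inr : O ⟶ (machineB 𝔸 O).obj Y)))

section MachineLiftAux

open Kleisli.Adjunction

lemma kleisli_comp_def (T : Monad C) {X Y Z : C}
    (f : (toKleisli T).obj X ⟶ (toKleisli T).obj Y)
    (g : (toKleisli T).obj Y ⟶ (toKleisli T).obj Z) :
    (f ≫ g).of = (show X ⟶ T.obj Y from f.of) ≫ T.map (show Y ⟶ T.obj Z from g.of) ≫ T.μ.app Z := rfl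

lemma kleisli_id_def (T : Monad C) (X : C) :
    Kleisli.Hom.of (𝟙 ((toKleisli T).obj X)) = T.η.app X := rfl

variable (T : Monad C) (G A : C ⥤ C) (ρ : A ⋙ G ≅ G ⋙ A)
    (Abar : Kleisli T ⥤ Kleisli T)
    (hAbar : Kleisli.Adjunction.toKleisli T ⋙ Abar =
      A ⋙ Kleisli.Adjunction.toKleisli T)

/-- The fully explicit form of `relKleisliLiftMap`. -/
def liftMapExplicit {X Y : C}
    (f : (toKleisli T).obj (G.obj X) ⟶ (toKleisli T).obj (G.obj Y)) :
    (toKleisli T).obj (G.obj (A.obj X)) ⟶ (toKleisli T).obj (G.obj (A.obj Y)) :=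
  (toKleisli T).map (ρ.hom.app X) ≫
    eqToHom (Functor.congr_obj hAbar (G.obj X)).symm ≫
    Abar.map f ≫
    eqToHom (Functor.congr_obj hAbar (G.obj Y)) ≫
    (toKleisli T).map (ρ.inv.app Y)

lemma liftMapExplicit_eq {X Y : C}
    (f : (relKleisliFree T G).obj X ⟶ (relKleisliFree T G).obj Y) :
    InducedCategory.Hom.hom (F := fun X : C => Kleisli.mk T (G.obj X)) (relKleisliLiftMap T G A ρ Abar hAbar f) =
      liftMapExplicit T G A ρ Abar hAbar (InducedCategory.Hom.hom (F := fun X : C => Kleisli.mk T (G.obj X)) f) := rfl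

lemma liftMapExplicit_id (X : C) :
    liftMapExplicit T G A ρ Abar hAbar (𝟙 ((toKleisli T).obj (G.obj X))) =
      𝟙 ((toKleisli T).obj (G.obj (A.obj X))) := by
  rw [liftMapExplicit, CategoryTheory.Functor.map_id]
  simp

lemma liftMapExplicit_comp {X Y Z : C}
    (f : (toKleisli T).obj (G.obj X) ⟶ (toKleisli T).obj (G.obj Y))
    (g : (toKleisli T).obj (G.obj Y) ⟶ (toKleisli T).obj (G.obj Z)) :
    liftMapExplicit T G A ρ Abar hAbar (f ≫ g) =
      liftMapExplicit T G A ρ Abar hAbar f ≫ liftMapExplicit T G A ρ Abar hAbar g := by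
  simp only [liftMapExplicit, Abar.map_comp, Category.assoc]
  rw [← Functor.map_comp_assoc (toKleisli T) (ρ.inv.app Y) (ρ.hom.app Y),
    Iso.inv_hom_id_app, CategoryTheory.Functor.map_id, Category.id_comp, eqToHom_trans_assoc,
    eqToHom_refl, Category.id_comp]

lemma liftMapExplicit_free {X Y : C} (h : X ⟶ Y) :
    liftMapExplicit T G A ρ Abar hAbar ((toKleisli T).map (G.map h)) =
      (toKleisli T).map (G.map (A.map h)) := by
  have h2 := Functor.congr_hom hAbar (G.map h)
  simp only [Functor.comp_map] at h2
  rw [liftMapExplicit, h2]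
  simp only [Category.assoc, eqToHom_trans_assoc, eqToHom_refl, Category.id_comp,
    eqToHom_trans, Category.comp_id]
  rw [← Functor.map_comp, ← Functor.map_comp]
  congr 1
  have := ρ.hom.naturality h
  simp only [Functor.comp_map] at this
  rw [← Category.assoc, ← this, Category.assoc, Iso.hom_inv_id_app, Category.comp_id]

lemma relKleisliLiftMap_id (X : C) :
    relKleisliLiftMap T G A ρ Abar hAbar (𝟙 ((relKleisliFree T G).obj X)) =
      𝟙 ((relKleisliFree T G).obj (A.obj X)) := by
  apply InducedCategory.Hom.ext; exact liftMapExplicit_id T G A ρ Abar hAbar X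

lemma relKleisliLiftMap_comp {X Y Z : C}
    (f : (relKleisliFree T G).obj X ⟶ (relKleisliFree T G).obj Y)
    (g : (relKleisliFree T G).obj Y ⟶ (relKleisliFree T G).obj Z) :
    relKleisliLiftMap T G A ρ Abar hAbar (f ≫ g) =
      relKleisliLiftMap T G A ρ Abar hAbar f ≫ relKleisliLiftMap T G A ρ Abar hAbar g := by
  apply InducedCategory.Hom.ext; exact liftMapExplicit_comp T G A ρ Abar hAbar _ _

lemma relKleisliLiftMap_free {X Y : C} (h : X ⟶ Y) :
    relKleisliLiftMap T G A ρ Abar hAbar ((relKleisliFree T G).map h) =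
      (relKleisliFree T G).map (A.map h) := by
  apply InducedCategory.Hom.ext; exact liftMapExplicit_free T G A ρ Abar hAbar h

end MachineLiftAux

section MachineHatAux

open Kleisli.Adjunction

variable (T : Monad C) (G : C ⥤ C) (𝔸 O : C)
    [PreservesColimitsOfShape (Discrete WalkingPair) G]

/-- The explicit Kleisli-level form of `machineHatMap`, as a function of the lifted map. -/
noncomputable def hatC {X Y : C}
    (l : (toKleisli T).obj (G.obj ((machineA 𝔸).obj X)) ⟶
      (toKleisli T).obj (G.obj ((machineA 𝔸).obj Y))) :
    (toKleisli T).obj (G.obj ((machineB 𝔸 O).obj X)) ⟶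
      (toKleisli T).obj (G.obj ((machineB 𝔸 O).obj Y)) :=
  Kleisli.Hom.mk <| show G.obj ((machineB 𝔸 O).obj X) ⟶ T.obj (G.obj ((machineB 𝔸 O).obj Y)) from
    (PreservesColimitPair.iso G ((machineA 𝔸).obj X) O).inv ≫
      coprod.map
        (show G.obj ((machineA 𝔸).obj X) ⟶ T.obj (G.obj ((machineA 𝔸).obj Y)) from l.of)
        (T.η.app (G.obj O)) ≫
      coprod.desc
        (T.map (G.map (coprod.inl : (machineA 𝔸).obj Y ⟶ (machineB 𝔸 O).obj Y)))
        (T.map (G.map (coprod.inr : O ⟶ (machineB 𝔸 O).obj Y)))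

lemma G_inl_comp_iso_inv (X : C) :
    G.map (coprod.inl : (machineA 𝔸).obj X ⟶ (machineB 𝔸 O).obj X) ≫
      (PreservesColimitPair.iso G ((machineA 𝔸).obj X) O).inv = coprod.inl := by
  rw [Iso.comp_inv_eq, PreservesColimitPair.iso_hom, coprodComparison_inl]

lemma G_inr_comp_iso_inv (X : C) :
    G.map (coprod.inr : O ⟶ (machineB 𝔸 O).obj X) ≫
      (PreservesColimitPair.iso G ((machineA 𝔸).obj X) O).inv = coprod.inr := by
  rw [Iso.comp_inv_eq, PreservesColimitPair.iso_hom, coprodComparison_inr]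

lemma hatC_id (X : C) :
    hatC T G 𝔸 O (𝟙 ((toKleisli T).obj (G.obj ((machineA 𝔸).obj X)))) =
      𝟙 ((toKleisli T).obj (G.obj ((machineB 𝔸 O).obj X))) := by
  apply Kleisli.hom_ext
  show (PreservesColimitPair.iso G ((machineA 𝔸).obj X) O).inv ≫
      coprod.map (T.η.app (G.obj ((machineA 𝔸).obj X))) (T.η.app (G.obj O)) ≫
      coprod.desc (T.map (G.map coprod.inl)) (T.map (G.map coprod.inr)) =
    T.η.app (G.obj ((machineB 𝔸 O).obj X))
  erw [Iso.inv_comp_eq, PreservesColimitPair.iso_hom]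
  ext
  · erw [coprod.inl_map_assoc, coprod.inl_desc, coprodComparison_inl_assoc]
    exact (T.η.naturality _).symm
  · erw [coprod.inr_map_assoc, coprod.inr_desc, coprodComparison_inr_assoc]
    exact (T.η.naturality _).symm

lemma hatC_comp {X Y Z : C}
    (l : (toKleisli T).obj (G.obj ((machineA 𝔸).obj X)) ⟶
      (toKleisli T).obj (G.obj ((machineA 𝔸).obj Y)))
    (l' : (toKleisli T).obj (G.obj ((machineA 𝔸).obj Y)) ⟶
      (toKleisli T).obj (G.obj ((machineA 𝔸).obj Z))) :
    hatC T G 𝔸 O (l ≫ l') = hatC T G 𝔸 O l ≫ hatC T G 𝔸 O l' := by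
  have key : ∀ (a : G.obj ((machineA 𝔸).obj X) ⟶ T.obj (G.obj ((machineA 𝔸).obj Y)))
      (a' : G.obj ((machineA 𝔸).obj Y) ⟶ T.obj (G.obj ((machineA 𝔸).obj Z))),
      (PreservesColimitPair.iso G ((machineA 𝔸).obj X) O).inv ≫
        coprod.map (a ≫ T.map a' ≫ T.μ.app (G.obj ((machineA 𝔸).obj Z)))
          (T.η.app (G.obj O)) ≫
        coprod.desc (T.map (G.map coprod.inl)) (T.map (G.map coprod.inr)) =
      ((PreservesColimitPair.iso G ((machineA 𝔸).obj X) O).inv ≫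
        coprod.map a (T.η.app (G.obj O)) ≫
        coprod.desc (T.map (G.map coprod.inl)) (T.map (G.map coprod.inr))) ≫
      T.map ((PreservesColimitPair.iso G ((machineA 𝔸).obj Y) O).inv ≫
        coprod.map a' (T.η.app (G.obj O)) ≫
        coprod.desc (T.map (G.map coprod.inl)) (T.map (G.map coprod.inr))) ≫
      T.μ.app (G.obj ((machineA 𝔸).obj Z ⨿ O)) := by
    intro a a'
    simp only [Category.assoc, Iso.cancel_iso_inv_left]
    ext
    · erw [coprod.inl_map_assoc, coprod.inl_desc, coprod.inl_map_assoc,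
        coprod.inl_desc_assoc, ← Functor.map_comp_assoc,
        reassoc_of% (G_inl_comp_iso_inv G 𝔸 O Y), coprod.inl_map_assoc, coprod.inl_desc,
        CategoryTheory.Functor.map_comp]
      simp only [Category.assoc]
      erw [show T.map (T.map (G.map (coprod.inl : (machineA 𝔸).obj Z ⟶ (machineB 𝔸 O).obj Z))) ≫
            T.μ.app (G.obj ((machineB 𝔸 O).obj Z)) =
          T.μ.app (G.obj ((machineA 𝔸).obj Z)) ≫ T.map (G.map coprod.inl) from
          T.μ.naturality _]
    · erw [coprod.inr_map_assoc, coprod.inr_desc, coprod.inr_map_assoc,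
        coprod.inr_desc_assoc, ← Functor.map_comp_assoc,
        reassoc_of% (G_inr_comp_iso_inv G 𝔸 O Y), coprod.inr_map_assoc, coprod.inr_desc,
        CategoryTheory.Functor.map_comp]
      simp only [Category.assoc]
      erw [show T.map (T.map (G.map (coprod.inr : O ⟶ (machineB 𝔸 O).obj Z))) ≫
            T.μ.app (G.obj ((machineB 𝔸 O).obj Z)) =
          T.μ.app (G.obj O) ≫ T.map (G.map coprod.inr) from
          T.μ.naturality _]
      simp
  apply Kleisli.hom_ext
  exact key (show _ ⟶ _ from l.of) (show _ ⟶ _ from l'.of)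

lemma hatC_free {X Y : C} (h : X ⟶ Y) :
    hatC T G 𝔸 O ((toKleisli T).map (G.map ((machineA 𝔸).map h))) =
      (toKleisli T).map (G.map ((machineB 𝔸 O).map h)) := by
  apply Kleisli.hom_ext
  show (PreservesColimitPair.iso G ((machineA 𝔸).obj X) O).inv ≫
      coprod.map (G.map ((machineA 𝔸).map h) ≫ T.η.app (G.obj ((machineA 𝔸).obj Y)))
        (T.η.app (G.obj O)) ≫
      coprod.desc (T.map (G.map coprod.inl)) (T.map (G.map coprod.inr)) =
    G.map ((machineB 𝔸 O).map h) ≫ T.η.app (G.obj ((machineB 𝔸 O).obj Y))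
  erw [Iso.inv_comp_eq, PreservesColimitPair.iso_hom]
  ext
  · erw [coprod.inl_map_assoc, coprod.inl_desc, coprodComparison_inl_assoc]
    simp only [Category.assoc]
    erw [show T.η.app (G.obj ((machineA 𝔸).obj Y)) ≫
        T.map (G.map (coprod.inl : (machineA 𝔸).obj Y ⟶ (machineB 𝔸 O).obj Y)) =
      G.map coprod.inl ≫ T.η.app (G.obj ((machineB 𝔸 O).obj Y)) from
      (T.η.naturality _).symm]
    erw [← Functor.map_comp_assoc, ← Functor.map_comp_assoc,
      show (machineB 𝔸 O).map h = coprod.map ((machineA 𝔸).map h) (𝟙 O) from rfl,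
      coprod.inl_map]
    rfl
  · erw [coprod.inr_map_assoc, coprod.inr_desc, coprodComparison_inr_assoc]
    erw [show T.η.app (G.obj O) ≫
        T.map (G.map (coprod.inr : O ⟶ (machineB 𝔸 O).obj Y)) =
      G.map coprod.inr ≫ T.η.app (G.obj ((machineB 𝔸 O).obj Y)) from
      (T.η.naturality _).symm]
    erw [← Functor.map_comp_assoc,
      show (machineB 𝔸 O).map h = coprod.map ((machineA 𝔸).map h) (𝟙 O) from rfl,
      coprod.inr_map]
    simp
    rfl

end MachineHatAux

lemma eqToHom_sandwich {D : Type*} [Category D] {a b : D} (p : a = a) (g : a ⟶ b) (q : b = b) :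
    g = eqToHom p ≫ g ≫ eqToHom q := by
  simp

/-- Under (A1)–(A3), the assignment `X ↦ B X`, `f ↦ B̂ f` defines an endofunctor
`B̂` on `Kl(T^G)` which is a Kleisli lifting of the machine endofunctor `B`,
i.e. `L ⋙ B̂ = B ⋙ L`. -/
theorem machine_relative_kleisli_lifting (T : Monad C) (G : C ⥤ C) (𝔸 O : C)
    [PreservesColimitsOfShape (Discrete WalkingPair) G]
    (ρ : machineA 𝔸 ⋙ G ≅ G ⋙ machineA 𝔸)
    (Abar : Kleisli T ⥤ Kleisli T)
    (hAbar : Kleisli.Adjunction.toKleisli T ⋙ Abar =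
      machineA 𝔸 ⋙ Kleisli.Adjunction.toKleisli T) :
    ∃ (Bhat : RelKleisli T G ⥤ RelKleisli T G)
      (hobj : ∀ X : C, Bhat.obj ((relKleisliFree T G).obj X) =
        (relKleisliFree T G).obj ((machineB 𝔸 O).obj X)),
      (∀ (X Y : C) (f : (relKleisliFree T G).obj X ⟶ (relKleisliFree T G).obj Y),
        Bhat.map f =
          eqToHom (hobj X) ≫ machineHatMap T G 𝔸 O ρ Abar hAbar f ≫
            eqToHom (hobj Y).symm) ∧
      relKleisliFree T G ⋙ Bhat = machineB 𝔸 O ⋙ relKleisliFree T G := by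
  have mh_eq : ∀ {X Y : C} (f : (relKleisliFree T G).obj X ⟶ (relKleisliFree T G).obj Y),
      machineHatMap T G 𝔸 O ρ Abar hAbar f =
        InducedCategory.Hom.mk (F := fun X : C => Kleisli.mk T (G.obj X)) (hatC T G 𝔸 O (InducedCategory.Hom.hom (F := fun X : C => Kleisli.mk T (G.obj X))
          (relKleisliLiftMap T G (machineA 𝔸) ρ Abar hAbar f))) := fun _ => rfl
  have mh_id : ∀ X : C,
      machineHatMap T G 𝔸 O ρ Abar hAbar (𝟙 ((relKleisliFree T G).obj X)) =
        𝟙 ((relKleisliFree T G).obj ((machineB 𝔸 O).obj X)) := by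
    intro X
    rw [mh_eq, relKleisliLiftMap_id]
    apply InducedCategory.Hom.ext; exact hatC_id T G 𝔸 O X
  have mh_comp : ∀ (X Y Z : C) (f : (relKleisliFree T G).obj X ⟶ (relKleisliFree T G).obj Y)
      (g : (relKleisliFree T G).obj Y ⟶ (relKleisliFree T G).obj Z),
      machineHatMap T G 𝔸 O ρ Abar hAbar (f ≫ g) =
        machineHatMap T G 𝔸 O ρ Abar hAbar f ≫ machineHatMap T G 𝔸 O ρ Abar hAbar g := by
    intro X Y Z f g
    rw [mh_eq, mh_eq, mh_eq, relKleisliLiftMap_comp]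
    apply InducedCategory.Hom.ext; exact hatC_comp T G 𝔸 O _ _
  have mh_free : ∀ (X Y : C) (h : X ⟶ Y),
      machineHatMap T G 𝔸 O ρ Abar hAbar ((relKleisliFree T G).map h) =
        (relKleisliFree T G).map ((machineB 𝔸 O).map h) := by
    intro X Y h
    rw [mh_eq, relKleisliLiftMap_free]
    apply InducedCategory.Hom.ext; exact hatC_free T G 𝔸 O h
  refine ⟨{ obj := fun X => (machineB 𝔸 O).obj X,
            map := fun {X Y} f => machineHatMap T G 𝔸 O ρ Abar hAbar f,
            map_id := fun X => mh_id X,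
            map_comp := fun {X Y Z} f g => mh_comp X Y Z f g },
          fun _ => rfl, fun X Y f => ?_, ?_⟩
  · exact eqToHom_sandwich _ _ _
  · refine CategoryTheory.Functor.ext (fun X => rfl) (fun X Y h => ?_)
    refine Eq.trans ?_ (eqToHom_sandwich _ _ _)
    exact mh_free X Y h
end

section
/- Let F : Type u ⥤ Type u be a functor that preserves weak pullbacks. For a type X let E X := {p : Set X × X // p.2 ∈ p.1}, and define ϑ_X : F.obj (Set X) → Set (F.obj X) by ϑ_X t = { s | ∃ w : F.obj (E X), F.map (fun p => p.val.1) w = t ∧ F.map (fun p => p.val.2) w = s }. Then ϑ is a Kl-law for the powerset monad Set, i.e.: (naturality) for every g : X → Y and every t : F.obj (Set X), Set.image (F.map g) (ϑ_X t) = ϑ_Y (F.map (Set.image g) t); (unit law) for every s : F.obj X, ϑ_X (F.map (fun x => {x}) s) = {s}; (multiplication law) for every t : F.obj (Set (Set X)), ϑ_X (F.map Set.sUnion t) = ⋃₀ (Set.image ϑ_X (ϑ_{Set X} t)). -/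
open CategoryTheory

universe u

/-- A commuting square of functions that is a weak pullback. -/
def IsWeakPullback {P X Y Z : Type u} (p : P → X) (q : P → Y)
    (f : X → Z) (g : Y → Z) : Prop :=
  (∀ w, f (p w) = g (q w)) ∧
  ∀ x y, f x = g y → ∃ w, p w = x ∧ q w = y

/-- A functor on types preserves weak pullbacks if it maps weak pullback
squares to weak pullback squares. -/
def PreservesWeakPullbacks (F : Type u ⥤ Type u) : Prop :=
  ∀ {P X Y Z : Type u} (p : P → X) (q : P → Y) (f : X → Z) (g : Y → Z),
    IsWeakPullback p q f g →
    IsWeakPullback (F.map (↾p)) (F.map (↾q)) (F.map (↾f)) (F.map (↾g))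

/-- The candidate Kl-law `ϑ : F ∘ Set ⟹ Set ∘ F` obtained as the relation
lifting of the membership relation, encoded by the type
`E X = {p : Set X × X // p.2 ∈ p.1}`. -/
def powKlLaw (F : Type u ⥤ Type u) (X : Type u) (t : F.obj (Set X)) :
    Set (F.obj X) :=
  {s | ∃ w : F.obj {p : Set X × X // p.2 ∈ p.1},
    F.map (↾(fun p => p.val.1)) w = t ∧ F.map (↾(fun p => p.val.2)) w = s}

/-- Auxiliary: functoriality of `F.map` on composites, pointwise. -/
theorem Fmap2 (F : Type u ⥤ Type u) {A B C : Type u} (f : A → B) (g : B → C)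
    (h : A → C) (hh : ∀ a, g (f a) = h a) (x : F.obj A) :
    F.map (↾g) (F.map (↾f) x) = F.map (↾h) x := by
  rw [← FunctorToTypes.map_comp_apply]
  rw [ConcreteCategory.hom_ext (↾f ≫ ↾g) (↾h) hh]

/-- If `F` preserves weak pullbacks, then `ϑ = powKlLaw F` is a Kl-law for the
powerset monad: it is natural, and compatible with the unit and multiplication
of the powerset monad. -/
theorem powKlLaw_is_klLaw (F : Type u ⥤ Type u)
    (hF : PreservesWeakPullbacks F) :
    (∀ (X Y : Type u) (g : X → Y) (t : F.obj (Set X)),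
      F.map (↾g) '' powKlLaw F X t = powKlLaw F Y (F.map (↾(Set.image g)) t)) ∧
    (∀ (X : Type u) (s : F.obj X),
      powKlLaw F X (F.map (↾(fun x => ({x} : Set X))) s) = {s}) ∧
    (∀ (X : Type u) (t : F.obj (Set (Set X))),
      powKlLaw F X (F.map (↾Set.sUnion) t) =
        ⋃₀ (powKlLaw F X '' powKlLaw F (Set X) t)) := by
  refine ⟨?_, ?_, ?_⟩
  · -- naturality
    intro X Y g t
    ext s
    constructor
    · rintro ⟨s', ⟨w, hw1, hw2⟩, rfl⟩
      refine ⟨F.map (↾(fun p : {p : Set X × X // p.2 ∈ p.1} =>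
        (⟨(g '' p.val.1, g p.val.2), Set.mem_image_of_mem g p.property⟩ :
          {p : Set Y × Y // p.2 ∈ p.1}))) w, ?_, ?_⟩
      · rw [Fmap2 F _ (fun p : {p : Set Y × Y // p.2 ∈ p.1} => p.val.1)
          (fun p : {p : Set X × X // p.2 ∈ p.1} => g '' p.val.1)
          (fun _ => rfl) w,
          ← Fmap2 F (fun p : {p : Set X × X // p.2 ∈ p.1} => p.val.1)
          (Set.image g) _ (fun _ => rfl) w, hw1]
      · rw [Fmap2 F _ (fun p : {p : Set Y × Y // p.2 ∈ p.1} => p.val.2)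
          (fun p : {p : Set X × X // p.2 ∈ p.1} => g p.val.2)
          (fun _ => rfl) w,
          ← Fmap2 F (fun p : {p : Set X × X // p.2 ∈ p.1} => p.val.2)
          g _ (fun _ => rfl) w, hw2]
    · rintro ⟨w, hw1, hw2⟩
      have wp : IsWeakPullback
          (fun q : {q : Set X × {p : Set Y × Y // p.2 ∈ p.1} //
            g '' q.1 = q.2.val.1} => q.val.1)
          (fun q => q.val.2)
          (Set.image g) (fun e : {p : Set Y × Y // p.2 ∈ p.1} => e.val.1) :=
        ⟨fun q => q.property, fun A e h => ⟨⟨(A, e), h⟩, rfl, rfl⟩⟩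
      obtain ⟨u, hu1, hu2⟩ := (hF _ _ _ _ wp).2 t w (by rw [hw1])
      have hmem : ∀ q : {q : Set X × {p : Set Y × Y // p.2 ∈ p.1} //
          g '' q.1 = q.2.val.1}, q.val.2.val.2 ∈ g '' q.val.1 := by
        intro q; rw [q.property]; exact q.val.2.property
      refine ⟨F.map (↾(fun p : {p : Set X × X // p.2 ∈ p.1} => p.val.2))
        (F.map (↾(fun q => (⟨(q.val.1, (hmem q).choose),
          (hmem q).choose_spec.1⟩ : {p : Set X × X // p.2 ∈ p.1}))) u),
        ⟨_, ?_, rfl⟩, ?_⟩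
      · rw [Fmap2 F _ (fun p : {p : Set X × X // p.2 ∈ p.1} => p.val.1)
          (fun q => q.val.1) (fun _ => rfl) u]
        exact hu1
      · rw [Fmap2 F _ (fun p : {p : Set X × X // p.2 ∈ p.1} => p.val.2)
          (fun q => (hmem q).choose) (fun _ => rfl) u,
          Fmap2 F _ g (fun q => q.val.2.val.2)
          (fun q => (hmem q).choose_spec.2) u,
          ← Fmap2 F (fun q => q.val.2)
          (fun e : {p : Set Y × Y // p.2 ∈ p.1} => e.val.2) _
          (fun _ => rfl) u, hu2, hw2]
  · -- unit law
    intro X s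
    ext s'
    constructor
    · rintro ⟨w, hw1, hw2⟩
      have wp : IsWeakPullback
          (fun x : X => (⟨({x}, x), rfl⟩ : {p : Set X × X // p.2 ∈ p.1}))
          (id : X → X)
          (fun p : {p : Set X × X // p.2 ∈ p.1} => p.val.1)
          (fun x : X => ({x} : Set X)) := by
        refine ⟨fun _ => rfl, fun e x h => ⟨x, ?_, rfl⟩⟩
        have hx : e.val.2 = x := by
          have h' : e.val.1 = ({x} : Set X) := h
          have := e.property; rw [h'] at this; exact this
        exact Subtype.ext (Prod.ext h.symm hx.symm)
      obtain ⟨u, hu1, hu2⟩ := (hF _ _ _ _ wp).2 w s (by rw [hw1])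
      have hu2' : u = s := by
        have := FunctorToTypes.map_id_apply F u
        rw [← hu2]; exact this.symm
      show s' = s
      rw [← hw2, ← hu1,
        Fmap2 F _ (fun p : {p : Set X × X // p.2 ∈ p.1} => p.val.2)
        (fun x : X => x) (fun _ => rfl) u, hu2']
      exact FunctorToTypes.map_id_apply F s
    · rintro rfl
      refine ⟨F.map (↾(fun x : X =>
        (⟨({x}, x), rfl⟩ : {p : Set X × X // p.2 ∈ p.1}))) s', ?_, ?_⟩
      · rw [Fmap2 F _ (fun p : {p : Set X × X // p.2 ∈ p.1} => p.val.1)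
          (fun x : X => ({x} : Set X)) (fun _ => rfl) s']
      · rw [Fmap2 F _ (fun p : {p : Set X × X // p.2 ∈ p.1} => p.val.2)
          (fun x : X => x) (fun _ => rfl) s']
        exact FunctorToTypes.map_id_apply F s'
  · -- multiplication law
    intro X t
    ext s
    constructor
    · rintro ⟨w, hw1, hw2⟩
      have wp : IsWeakPullback
          (fun q : {q : Set (Set X) × {p : Set X × X // p.2 ∈ p.1} //
            ⋃₀ q.1 = q.2.val.1} => q.val.1)
          (fun q => q.val.2)
          (Set.sUnion) (fun e : {p : Set X × X // p.2 ∈ p.1} => e.val.1) :=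
        ⟨fun q => q.property, fun A e h => ⟨⟨(A, e), h⟩, rfl, rfl⟩⟩
      obtain ⟨u, hu1, hu2⟩ := (hF _ _ _ _ wp).2 t w (by rw [hw1])
      have hmem : ∀ q : {q : Set (Set X) × {p : Set X × X // p.2 ∈ p.1} //
          ⋃₀ q.1 = q.2.val.1},
          ∃ A, A ∈ q.val.1 ∧ q.val.2.val.2 ∈ A := by
        intro q
        have : q.val.2.val.2 ∈ ⋃₀ q.val.1 := by
          rw [q.property]; exact q.val.2.property
        exact this
      refine ⟨powKlLaw F X (F.map (↾(fun p : {p : Set (Set X) × Set X //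
          p.2 ∈ p.1} => p.val.2))
          (F.map (↾(fun q => (⟨(q.val.1, (hmem q).choose),
            (hmem q).choose_spec.1⟩ :
            {p : Set (Set X) × Set X // p.2 ∈ p.1}))) u)),
        ⟨_, ⟨_, ?_, rfl⟩, rfl⟩, ?_⟩
      · rw [Fmap2 F _ (fun p : {p : Set (Set X) × Set X // p.2 ∈ p.1} =>
          p.val.1) (fun q => q.val.1) (fun _ => rfl) u]
        exact hu1
      · refine ⟨F.map (↾(fun q => (⟨((hmem q).choose, q.val.2.val.2),
          (hmem q).choose_spec.2⟩ : {p : Set X × X // p.2 ∈ p.1}))) u, ?_, ?_⟩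
        · rw [Fmap2 F _ (fun p : {p : Set X × X // p.2 ∈ p.1} => p.val.1)
            (fun q => (hmem q).choose) (fun _ => rfl) u,
            Fmap2 F _ (fun p : {p : Set (Set X) × Set X // p.2 ∈ p.1} =>
            p.val.2) (fun q => (hmem q).choose) (fun _ => rfl) u]
        · refine (Fmap2 F (fun q => (⟨((hmem q).choose, q.val.2.val.2),
            (hmem q).choose_spec.2⟩ : {p : Set X × X // p.2 ∈ p.1}))
            (fun p => p.val.2) (fun q => q.val.2.val.2)
            (fun _ => rfl) u).trans ?_
          rw [← Fmap2 F (fun q => q.val.2)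
            (fun e : {p : Set X × X // p.2 ∈ p.1} => e.val.2) _
            (fun _ => rfl) u, hu2, hw2]
    · rintro ⟨S, ⟨t', ⟨v, hv1, hv2⟩, rfl⟩, ⟨w, hw1, hw2⟩⟩
      have wp : IsWeakPullback
          (fun q : {q : {p : Set (Set X) × Set X // p.2 ∈ p.1} ×
            {p : Set X × X // p.2 ∈ p.1} // q.1.val.2 = q.2.val.1} => q.val.1)
          (fun q => q.val.2)
          (fun e : {p : Set (Set X) × Set X // p.2 ∈ p.1} => e.val.2)
          (fun e : {p : Set X × X // p.2 ∈ p.1} => e.val.1) :=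
        ⟨fun q => q.property, fun a b h => ⟨⟨(a, b), h⟩, rfl, rfl⟩⟩
      obtain ⟨u, hu1, hu2⟩ := (hF _ _ _ _ wp).2 v w (by rw [hw1, hv2])
      have hmem : ∀ q : {q : {p : Set (Set X) × Set X // p.2 ∈ p.1} ×
          {p : Set X × X // p.2 ∈ p.1} // q.1.val.2 = q.2.val.1},
          q.val.2.val.2 ∈ ⋃₀ q.val.1.val.1 := by
        intro q
        refine ⟨q.val.1.val.2, q.val.1.property, ?_⟩
        rw [q.property]; exact q.val.2.property
      refine ⟨F.map (↾(fun q => (⟨(⋃₀ q.val.1.val.1, q.val.2.val.2), hmem q⟩ :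
        {p : Set X × X // p.2 ∈ p.1}))) u, ?_, ?_⟩
      · rw [Fmap2 F _ (fun p : {p : Set X × X // p.2 ∈ p.1} => p.val.1)
          (fun q => ⋃₀ q.val.1.val.1) (fun _ => rfl) u,
          ← Fmap2 F (fun q => q.val.1.val.1) Set.sUnion _ (fun _ => rfl) u,
          ← Fmap2 F (fun q => q.val.1)
          (fun e : {p : Set (Set X) × Set X // p.2 ∈ p.1} => e.val.1) _
          (fun _ => rfl) u, hu1, hv1]
      · refine (Fmap2 F (fun q => (⟨(⋃₀ q.val.1.val.1, q.val.2.val.2),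
          hmem q⟩ : {p : Set X × X // p.2 ∈ p.1}))
          (fun p => p.val.2) (fun q => q.val.2.val.2)
          (fun _ => rfl) u).trans ?_
        rw [← Fmap2 F (fun q => q.val.2)
          (fun e : {p : Set X × X // p.2 ∈ p.1} => e.val.2) _
          (fun _ => rfl) u, hu2, hw2]
end
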